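/- Suppose a, b, c, d are nonnegative integers and s is a nonnegative rational number satisfying: (1) a + b + c = 8; (2) 0 ≤ d ≤ c; (3) (a+b)/16 + d/2 + s = 1/2; (4) b/2 + c/16 + s is an integer that is either 0 or at least 2. Then d = 0, c ∈ {0, 4}, and: if c = 4 then a = 1, b = 3, s = 1/4; if c = 0 then s = 0 and b ∈ {0, 4, 6, 8}. -/
import Mathlib


/-- The arithmetic of the fusion-rule analysis: if `a + b + c = 8`, `0 ≤ d ≤ c`,
`(a+b)/16 + d/2 + s = 1/2` and `b/2 + c/16 + s` is an integer equal to `0` or at least `2`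
(with `s ≥ 0`), then `d = 0`, `c ∈ {0,4}`, and the stated consequences hold. -/
theorem fusion_rule_arithmetic
    (a b c d : ℕ) (s : ℚ) (hs : 0 ≤ s)
    (h1 : a + b + c = 8)
    (h2 : d ≤ c)
    (h3 : ((a : ℚ) + b) / 16 + (d : ℚ) / 2 + s = 1 / 2)
    (h4 : ∃ m : ℤ, (b : ℚ) / 2 + (c : ℚ) / 16 + s = (m : ℚ) ∧ (m = 0 ∨ 2 ≤ m)) :
    d = 0 ∧ (c = 0 ∨ c = 4)
      ∧ (c = 4 → a = 1 ∧ b = 3 ∧ s = 1 / 4)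
      ∧ (c = 0 → s = 0 ∧ (b = 0 ∨ b = 4 ∨ b = 6 ∨ b = 8)) := by
  obtain ⟨m, hm, hm2⟩ := h4
  have h1' : (a:ℚ) + (b:ℚ) + (c:ℚ) = 8 := by exact_mod_cast h1
  have hs' : s = (c:ℚ)/16 - (d:ℚ)/2 := by linarith
  have hd8 : 8*(d:ℤ) ≤ (c:ℤ) := by
    have : 8*(d:ℚ) ≤ (c:ℚ) := by linarith
    exact_mod_cast this
  have key : 4*(b:ℤ) + (c:ℤ) - 4*(d:ℤ) = 8*m := by
    have : 4*(b:ℚ) + (c:ℚ) - 4*(d:ℚ) = 8*(m:ℚ) := by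
      rw [hs'] at hm; linarith
    exact_mod_cast this
  have hd0 : d = 0 := by omega
  refine ⟨hd0, by omega, ?_, ?_⟩
  · intro hc4
    refine ⟨by omega, by omega, ?_⟩
    rw [hs', hd0, hc4]; norm_num
  · intro hc0
    refine ⟨by rw [hs', hd0, hc0]; norm_num, by omega⟩
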